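/- Suppose every execution in which an event of transaction T commits contains a state in which all events of T are precommitted, and no event may be scheduled while a conflicting event of another transaction is precommitted but not yet committed. Then for any two conflicting transactions T1, T2 that both commit in execution E, their all-precommitted states are distinct and ordered in E, and the earlier one determines the transaction order: if T1's all-precommitted state precedes T2's, then no event of T2 happens before any event of T1. -/
import Mathlib

/-- Staged commit serializability core: if no event may be scheduled while a
conflicting event is precommitted but uncommitted, then for conflicting
transactions whose all-precommitted states are ordered s1 < s2, every
conflicting pair is precommitted in the same order, so T2 never happens before
T1. -/
theorem stmt_18 {E : Type*} (T1 T2 : Finset E) (p c : E → ℕ)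
    (hpc : ∀ e, p e < c e) (hinj : Function.Injective p)
    (conf : E → E → Prop) (hsymm : Symmetric conf)
    (hrule : ∀ e1 e2, conf e1 e2 → p e1 < p e2 → c e1 < p e2)
    (hdisj : Disjoint T1 T2)
    (s1 s2 : ℕ)
    (h1a : ∀ e ∈ T1, p e ≤ s1) (h1b : ∀ e ∈ T1, s1 < c e)
    (h2a : ∀ e ∈ T2, p e ≤ s2) (h2b : ∀ e ∈ T2, s2 < c e)
    (hconf : ∃ e1 ∈ T1, ∃ e2 ∈ T2, conf e1 e2)
    (hlt : s1 < s2) :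
    ∀ e1 ∈ T1, ∀ e2 ∈ T2, conf e1 e2 → p e1 < p e2 := by
  intro e1 h1 e2 h2 hc
  rcases lt_trichotomy (p e1) (p e2) with h | h | h
  · exact h
  · exact absurd (hinj h ▸ h1) (Finset.disjoint_left.mp hdisj · h2)
  · have := hrule e2 e1 (hsymm hc) h
    have : c e2 < c e2 :=
      lt_of_lt_of_le this ((h1a e1 h1).trans (le_of_lt (hlt.trans (h2b e2 h2))))
    exact absurd this (lt_irrefl _)
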